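/- Let X be a c-well-filtered P-space and K₁, K₂ saturated Lindelöf subsets. If there exists an open U with K₂ ⊆ U ⊆ K₁ (i.e., K₂ ⊆ int(K₁)), then K₁ ≪_c K₂ in the poset (LQ(X), ⊇). -/
import Mathlib


universe u

/-- A set is saturated if it equals the intersection of its open neighbourhoods. -/
def IsSaturatedSet {X : Type u} [TopologicalSpace X] (A : Set X) : Prop :=
  A = ⋂₀ {U : Set X | IsOpen U ∧ A ⊆ U}

/-- A family of sets is countably filtered (under `⊆`) if every countable subfamily
has a lower bound in the family. -/
def CntFilteredFam {X : Type u} (S : Set (Set X)) : Prop :=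
  ∀ T ⊆ S, T.Countable → ∃ L ∈ S, ∀ t ∈ T, L ⊆ t

/-- A family of sets is countably directed (under `⊆`) if every countable subfamily
has an upper bound in the family. -/
def CntDirectedFam {X : Type u} (S : Set (Set X)) : Prop :=
  ∀ T ⊆ S, T.Countable → ∃ U ∈ S, ∀ t ∈ T, t ⊆ U

/-- A space is c-well-filtered if for every countably filtered family of saturated
Lindelöf subsets whose intersection is contained in an open `U`, some member is contained in `U`. -/
def CWellFiltered (X : Type u) [TopologicalSpace X] : Prop :=
  ∀ S : Set (Set X), (∀ K ∈ S, IsSaturatedSet K ∧ IsLindelof K) →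
    CntFilteredFam S → ∀ U : Set X, IsOpen U → ⋂₀ S ⊆ U → ∃ K ∈ S, K ⊆ U

/-- A subset `D` is countably directed w.r.t. `le` if every countable subset of `D`
has an upper bound in `D`. -/
def CntDirected {α : Type u} (le : α → α → Prop) (D : Set α) : Prop :=
  ∀ E ⊆ D, E.Countable → ∃ d ∈ D, ∀ e ∈ E, le e d

/-- `a` is a least upper bound of `D` w.r.t. `le`. -/
def RIsLUB {α : Type u} (le : α → α → Prop) (D : Set α) (a : α) : Prop :=
  (∀ d ∈ D, le d a) ∧ ∀ b, (∀ d ∈ D, le d b) → le a b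

/-- Countably directed complete: every countably directed subset has a least upper bound. -/
def CDComplete {α : Type u} (le : α → α → Prop) : Prop :=
  ∀ D : Set α, CntDirected le D → ∃ a, RIsLUB le D a

/-- `x` is countably way-below `y`. -/
def CWayBelow {α : Type u} (le : α → α → Prop) (x y : α) : Prop :=
  ∀ D : Set α, CntDirected le D → ∀ a, RIsLUB le D a → le y a → ∃ d ∈ D, le x d

/-- `U` is σ-Scott open: an upper set meeting every countably directed set whose sup lies in `U`. -/
def SigmaScottOpenRel {α : Type u} (le : α → α → Prop) (U : Set α) : Prop :=
  (∀ x ∈ U, ∀ y, le x y → y ∈ U) ∧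
  ∀ D : Set α, CntDirected le D → ∀ a, RIsLUB le D a → a ∈ U → ∃ d ∈ D, d ∈ U

/-- `F` is countably filtered w.r.t. `le`: every countable subset has a lower bound in `F`. -/
def CntFilteredRel {α : Type u} (le : α → α → Prop) (F : Set α) : Prop :=
  ∀ E ⊆ F, E.Countable → ∃ l ∈ F, ∀ e ∈ E, le l e

/-- Countably approximating: countably directed complete and each `x` is the sup of
the countably directed set of elements countably way-below `x`. -/
def CntApprox {α : Type u} (le : α → α → Prop) : Prop :=
  CDComplete le ∧
    ∀ x, CntDirected le {y | CWayBelow le y x} ∧ RIsLUB le {y | CWayBelow le y x} x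

/-- `B` is a σ-basis: for each `x`, `B ∩ ⇓꜀x` is countably directed with sup `x`. -/
def IsSigmaBasis {α : Type u} (le : α → α → Prop) (B : Set α) : Prop :=
  ∀ x, CntDirected le (B ∩ {y | CWayBelow le y x}) ∧
    RIsLUB le (B ∩ {y | CWayBelow le y x}) x

/-- A P-space: every countable intersection of open sets is open. -/
def PSpace (X : Type u) [TopologicalSpace X] : Prop :=
  ∀ 𝒰 : Set (Set X), 𝒰.Countable → (∀ U ∈ 𝒰, IsOpen U) → IsOpen (⋂₀ 𝒰)

/-- Locally Lindelöf: every open neighbourhood contains a saturated Lindelöf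
neighbourhood. -/
def LocallyLindelofSp (X : Type u) [TopologicalSpace X] : Prop :=
  ∀ U : Set X, IsOpen U → ∀ x ∈ U, ∃ K : Set X,
    IsSaturatedSet K ∧ IsLindelof K ∧ x ∈ interior K ∧ K ⊆ U

/-- The saturated Lindelöf subsets of `X`. -/
def LQ (X : Type u) [TopologicalSpace X] : Type u :=
  {K : Set X // IsSaturatedSet K ∧ IsLindelof K}

/-- The order of `(LQ(X), ⊇)`: reverse inclusion. -/
def lqLe {X : Type u} [TopologicalSpace X] (A B : LQ X) : Prop := B.1 ⊆ A.1

/-- in a c-well-filtered P-space, if `K₂ ⊆ U ⊆ K₁` for some open `U`,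
then `K₁ ≪꜀ K₂` in `(LQ(X), ⊇)`. -/
theorem stmt16 {X : Type u} [TopologicalSpace X] (hW : CWellFiltered X) (hP : PSpace X)
    (K₁ K₂ : LQ X) (h : ∃ U : Set X, IsOpen U ∧ K₂.1 ⊆ U ∧ U ⊆ K₁.1) :
    CWayBelow (lqLe (X := X)) K₁ K₂ := by
  obtain ⟨U, hUo, hK2U, hUK1⟩ := h
  intro D hD a ha hK2a
  set S : Set (Set X) := Subtype.val '' D with hS
  have hSmem : ∀ K ∈ S, IsSaturatedSet K ∧ IsLindelof K := by
    rintro K ⟨d, hd, rfl⟩; exact d.2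
  have hSfil : CntFilteredFam S := by
    intro T hTS hTc
    have hE : ((Subtype.val ⁻¹' T : Set (LQ X)) ∩ D).Countable :=
      (hTc.preimage Subtype.val_injective).mono Set.inter_subset_left
    obtain ⟨d, hdD, hdub⟩ := hD _ Set.inter_subset_right hE
    refine ⟨d.1, ⟨d, hdD, rfl⟩, ?_⟩
    intro t htT
    obtain ⟨e, heD, rfl⟩ := hTS htT
    exact hdub e ⟨htT, heD⟩
  -- Q = ⋂₀ S is saturated
  have hQsat : IsSaturatedSet (⋂₀ S) := by
    apply Set.Subset.antisymm
    · intro x hx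
      exact Set.mem_sInter.2 fun V hV => hV.2 hx
    · intro x hx
      refine Set.mem_sInter.2 fun K hK => ?_
      have hKsat := (hSmem K hK).1
      rw [hKsat]
      refine Set.mem_sInter.2 fun V hV => ?_
      exact Set.mem_sInter.1 hx V ⟨hV.1, (Set.sInter_subset_of_mem hK).trans hV.2⟩
  -- Q is Lindelöf
  have hQlin : IsLindelof (⋂₀ S) := by
    rw [isLindelof_iff_countable_subcover]
    intro ι V hVo hQV
    obtain ⟨K, hKS, hKU⟩ := hW S hSmem hSfil (⋃ i, V i) (isOpen_iUnion hVo) hQV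
    obtain ⟨r, hrc, hrcov⟩ := (hSmem K hKS).2.elim_countable_subcover V hVo hKU
    exact ⟨r, hrc, (Set.sInter_subset_of_mem hKS).trans hrcov⟩
  set b : LQ X := ⟨⋂₀ S, hQsat, hQlin⟩ with hb
  have hub : ∀ d ∈ D, lqLe d b := fun d hd =>
    Set.sInter_subset_of_mem ⟨d, hd, rfl⟩
  have hQa : (⋂₀ S) ⊆ a.1 := ha.2 b hub
  obtain ⟨K, hKS, hKU⟩ := hW S hSmem hSfil U hUo (hQa.trans (hK2a.trans hK2U))
  obtain ⟨d, hdD, rfl⟩ := hKS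
  exact ⟨d, hdD, (hKU.trans hUK1 : d.1 ⊆ K₁.1)⟩
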